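/- For any replacement rule satisfying the Fixation Axiom and Assumption 1 (consistency of monoallelic states), the system of equations d°_g v_g = Σ_{h∈G} e°_{gh} v_h for all g ∈ G, together with Σ_{g∈G} v_g = n, has a unique solution {v_g}_{g∈G}, and this solution satisfies v_g ≥ 0 for every g ∈ G. -/

import Mathlib

/-!
Common formal scaffold for "A mathematical formalism for natural selection
with arbitrary spatial and genetic structure" (Allen & McAvoy).

A population is a finite nonempty set `G` of genetic sites.  A state is a
subset of `G` (the set of sites occupied by allele `A`); `∅` is the
monoallelic state `a` and `Finset.univ` is the monoallelic state `A`.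
A replacement event is a pair `(R, α)` with `R ⊆ G` and `α : R → G`.
-/

open Filter Topology Set

namespace NatSel

variable (G : Type) [Fintype G] [DecidableEq G]

/-- A state of the population: the set of sites holding allele `A`. -/
abbrev PopState := Finset G

/-- A replacement event `(R, α)`: the replaced set `R ⊆ G` together with the
parentage map `α : R → G`. -/
abbrev RepEvent := Σ R : Finset G, (↥R → G)

variable {G}

/-- `x_g ∈ {0,1}` as a real number. -/
def xg (x : PopState G) (g : G) : ℝ := if g ∈ x then 1 else 0

/-- `α̃` : agrees with `α` on `R`, is the identity off `R`. -/
def tildeMap (e : RepEvent G) (g : G) : G :=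
  if h : g ∈ e.1 then e.2 ⟨g, h⟩ else g

/-- `p` is a replacement rule: for each state it gives a probability
distribution over replacement events. -/
def IsRule (p : PopState G → RepEvent G → ℝ) : Prop :=
  (∀ x e, 0 ≤ p x e) ∧ ∀ x, ∑ e : RepEvent G, p x e = 1

/-- The Fixation Axiom. -/
def FixationAxiom (p : PopState G → RepEvent G → ℝ) : Prop :=
  ∃ g : G, ∃ m : ℕ, 0 < m ∧ ∃ ev : Fin m → RepEvent G,
    (∀ k, ∀ x : PopState G, 0 < p x (ev k)) ∧
    (∃ k, g ∈ (ev k).1) ∧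
    (∀ h : G, (List.ofFn fun k => tildeMap (ev k)).foldr (· ∘ ·) id h = g)

/-- `e_{gh}(x)`: marginal probability that the allele in site `h` is replaced
by a copy of the allele in site `g`, in state `x`. -/
def eMarg (p : PopState G → RepEvent G → ℝ) (g h : G) (x : PopState G) : ℝ :=
  ∑ e : RepEvent G, if hh : h ∈ e.1 then (if e.2 ⟨h, hh⟩ = g then p x e else 0) else 0

/-- `b_g(x)`: expected offspring number (birth rate) of site `g` in state `x`. -/
def bRate (p : PopState G → RepEvent G → ℝ) (g : G) (x : PopState G) : ℝ :=
  ∑ h, eMarg p g h x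

/-- `d_g(x)`: death probability of site `g` in state `x`. -/
def dProb (p : PopState G → RepEvent G → ℝ) (g : G) (x : PopState G) : ℝ :=
  ∑ h, eMarg p h g x

/-- `b(x)`: total expected offspring number in state `x`. -/
def bTot (p : PopState G → RepEvent G → ℝ) (x : PopState G) : ℝ :=
  ∑ g, bRate p g x

/-- Probability that a replaced site whose parent holds allele `parent`
(`true` = `A`) acquires allele `child`, with mutation probability `u` and
mutational bias `ν`. -/
def siteProb (u ν : ℝ) (parent child : Bool) : ℝ :=
  (if child = parent then 1 - u else 0) + (if child = true then u * ν else u * (1 - ν))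

/-- One-step transition probability `P_{x → y}` of the evolutionary Markov
chain with replacement rule `p`, mutation probability `u`, mutational bias `ν`. -/
def step (p : PopState G → RepEvent G → ℝ) (u ν : ℝ) (x y : PopState G) : ℝ :=
  ∑ e : RepEvent G, p x e *
    (if y \ e.1 = x \ e.1 then
       ∏ g ∈ e.1.attach, siteProb u ν (decide (e.2 g ∈ x)) (decide (g.1 ∈ y))
     else 0)

/-- `t`-step transition probabilities of a kernel `P`. -/
def iterKer (P : PopState G → PopState G → ℝ) : ℕ → PopState G → PopState G → ℝ
  | 0, x, y => if x = y then 1 else 0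
  | (t + 1), x, y => ∑ z : PopState G, iterKer P t x z * P z y

/-- The state obtained from `x` by the (mutation-free) replacement event `e`. -/
def applyEvent (e : RepEvent G) (x : PopState G) : PopState G :=
  Finset.univ.filter fun g => tildeMap e g ∈ x

/-- One-step transition probability of the mutation-free (`u = 0`) chain. -/
def step0 (p : PopState G → RepEvent G → ℝ) (x y : PopState G) : ℝ :=
  ∑ e : RepEvent G, if y = applyEvent e x then p x e else 0

/-- The mutant appearance distribution `μ_A`: probability `d_g(a)/b(a)` on the
state `{g}`, for each `g ∈ G`. -/
noncomputable def muA (p : PopState G → RepEvent G → ℝ) (x : PopState G) : ℝ :=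
  ∑ g : G, if x = {g} then dProb p g ∅ / bTot p ∅ else 0

/-- The mutant appearance distribution `μ_a`: probability `d_g(A)/b(A)` on the
state `G \ {g}`, for each `g ∈ G`. -/
noncomputable def mua (p : PopState G → RepEvent G → ℝ) (x : PopState G) : ℝ :=
  ∑ g : G, if x = Finset.univ \ {g} then dProb p g Finset.univ / bTot p Finset.univ else 0

/-- Fixation probability `ρ_A` (computed at `u = 0`). -/
noncomputable def rhoA (p : PopState G → RepEvent G → ℝ) (ν : ℝ) : ℝ :=
  ∑ x : PopState G, muA p x *
    limUnder atTop (fun t => iterKer (step p 0 ν) t x Finset.univ)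

/-- Fixation probability `ρ_a` (computed at `u = 0`). -/
noncomputable def rhoa (p : PopState G → RepEvent G → ℝ) (ν : ℝ) : ℝ :=
  ∑ x : PopState G, mua p x *
    limUnder atTop (fun t => iterKer (step p 0 ν) t x ∅)

/-- Frequency `x = (1/n) Σ_g x_g` of allele `A`. -/
noncomputable def freq (x : PopState G) : ℝ := (x.card : ℝ) / (Fintype.card G : ℝ)

/-- Expected change due to selection, `Δ_sel(x) = Σ_g x_g (b_g(x) − d_g(x))`. -/
def deltaSel (p : PopState G → RepEvent G → ℝ) (x : PopState G) : ℝ :=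
  ∑ g, xg x g * (bRate p g x - dProb p g x)

/-- The finset of states other than the monoallelic states `a = ∅`, `A = univ`. -/
def offStates (G : Type) [Fintype G] [DecidableEq G] : Finset (PopState G) :=
  Finset.univ.filter fun x : PopState G => x ≠ ∅ ∧ x ≠ Finset.univ

/-- Assumption 1: consistency of monoallelic states. -/
def ConsistentMono (p : PopState G → RepEvent G → ℝ) : Prop :=
  ∀ e : RepEvent G, p ∅ e = p Finset.univ e

/-- A replacement rule represents neutral drift: probabilities are
state-independent. -/
def NeutralDrift (p : PopState G → RepEvent G → ℝ) : Prop :=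
  ∀ x e, p x e = p ∅ e

/-- Reproductive values: `{v_g}` solves `d°_g v_g = Σ_h e°_{gh} v_h` (with the
monoallelic-state quantities) together with `Σ_g v_g = n`. -/
def IsRepVal (p : PopState G → RepEvent G → ℝ) (v : G → ℝ) : Prop :=
  (∀ g, dProb p g ∅ * v g = ∑ h, eMarg p g h ∅ * v h) ∧
    ∑ g, v g = (Fintype.card G : ℝ)

/-- RV-weighted birth rate `b̂_g(x) = Σ_h e_{gh}(x) v_h`. -/
def bHat (p : PopState G → RepEvent G → ℝ) (v : G → ℝ) (g : G) (x : PopState G) : ℝ :=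
  ∑ h, eMarg p g h x * v h

/-- RV-weighted death rate `d̂_g(x) = v_g d_g(x)`. -/
def dHat (p : PopState G → RepEvent G → ℝ) (v : G → ℝ) (g : G) (x : PopState G) : ℝ :=
  v g * dProb p g x

/-- Total RV-weighted birth rate `b̂(x)`. -/
def bHatTot (p : PopState G → RepEvent G → ℝ) (v : G → ℝ) (x : PopState G) : ℝ :=
  ∑ g, bHat p v g x

/-- RV-weighted change due to selection `Δ̂_sel(x) = Σ_g x_g (b̂_g(x) − d̂_g(x))`. -/
def deltaHatSel (p : PopState G → RepEvent G → ℝ) (v : G → ℝ) (x : PopState G) : ℝ :=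
  ∑ g, xg x g * (bHat p v g x - dHat p v g x)

/-- Fitness `w_g(x) = v_g − d̂_g(x) + b̂_g(x)`. -/
def fitness (p : PopState G → RepEvent G → ℝ) (v : G → ℝ) (g : G) (x : PopState G) : ℝ :=
  v g - dHat p v g x + bHat p v g x

/-- RV-weighted frequency `x̂ = (1/n) Σ_g v_g x_g`. -/
noncomputable def freqHat (v : G → ℝ) (x : PopState G) : ℝ :=
  (∑ g, v g * xg x g) / (Fintype.card G : ℝ)

/-- `{π u}_{0<u≤1}` is, for each mutation probability `0 < u ≤ 1`, a stationary
distribution of the evolutionary Markov chain (i.e. the mutation-selection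
stationary distribution, which is unique by ergodicity). -/
def IsMSSFamily (p : PopState G → RepEvent G → ℝ) (ν : ℝ)
    (π : ℝ → PopState G → ℝ) : Prop :=
  ∀ u, u ∈ Set.Ioc (0 : ℝ) 1 →
    (∀ x, 0 ≤ π u x) ∧ (∑ x : PopState G, π u x = 1) ∧
      ∀ y, π u y = ∑ x : PopState G, π u x * step p u ν x y

/-- `πR` is the rare-mutation conditional (RMC) distribution associated with
the MSS family `π`: for each non-monoallelic state `x`,
`πR x = lim_{u→0} π_MSS(x)/(1 − π_MSS(A) − π_MSS(a))`. -/
def IsRMC (π : ℝ → PopState G → ℝ) (πR : PopState G → ℝ) : Prop :=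
  ∀ x ∈ offStates G,
    Tendsto (fun u => π u x / (1 - π u Finset.univ - π u ∅))
      (nhdsWithin 0 (Set.Ioi 0)) (nhds (πR x))

end NatSel

open NatSel

namespace Statement6Aux

open NatSel Matrix Module

variable {G : Type} [Fintype G] [DecidableEq G]

/-- The ancestral matrix `M g h = e°_{gh} + δ_{gh}(1 - d°_g)`. -/
def M (p : PopState G → RepEvent G → ℝ) : Matrix G G ℝ :=
  Matrix.of fun g h => eMarg p g h ∅ + if g = h then 1 - dProb p g ∅ else 0

variable {p : PopState G → RepEvent G → ℝ}

lemma eMarg_nonneg (hp : IsRule p) (g h : G) (x : PopState G) : 0 ≤ eMarg p g h x := by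
  refine Finset.sum_nonneg fun e _ => ?_
  by_cases hh : h ∈ e.1
  · simp only [hh, dite_true]
    split
    · exact hp.1 x e
    · exact le_refl 0
  · simp [hh]

lemma dProb_eq (g : G) (x : PopState G) :
    dProb p g x = ∑ e : RepEvent G, if g ∈ e.1 then p x e else 0 := by
  unfold dProb eMarg
  rw [Finset.sum_comm]
  refine Finset.sum_congr rfl fun e _ => ?_
  by_cases hg : g ∈ e.1
  · simp [hg]
  · simp [hg]

lemma dProb_le_one (hp : IsRule p) (g : G) (x : PopState G) : dProb p g x ≤ 1 := by
  rw [dProb_eq, ← hp.2 x]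
  refine Finset.sum_le_sum fun e _ => ?_
  split
  · exact le_refl _
  · exact hp.1 x e

lemma M_nonneg (hp : IsRule p) (g h : G) : 0 ≤ M p g h := by
  have h1 := eMarg_nonneg hp g h (∅ : PopState G)
  have h2 := dProb_le_one hp g (∅ : PopState G)
  unfold M
  simp only [Matrix.of_apply]
  split <;> linarith

lemma col_sum (hp : IsRule p) (h : G) : ∑ g, M p g h = 1 := by
  unfold M
  simp only [Matrix.of_apply]
  rw [Finset.sum_add_distrib]
  have h1 : ∑ g : G, (if g = h then 1 - dProb p g ∅ else 0) = 1 - dProb p h ∅ := by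
    rw [Finset.sum_ite_eq' Finset.univ h (fun g => 1 - dProb p g ∅)]
    simp
  have h2 : ∑ g : G, eMarg p g h ∅ = dProb p h ∅ := rfl
  rw [h1, h2]; ring

lemma step_pos (hp : IsRule p) (e0 : RepEvent G) (he : 0 < p ∅ e0) (t : G) :
    0 < M p (tildeMap e0 t) t := by
  by_cases ht : t ∈ e0.1
  · have h1 : p ∅ e0 ≤ eMarg p (tildeMap e0 t) t ∅ := by
      unfold eMarg
      have : ∀ e : RepEvent G,
          0 ≤ (if hh : t ∈ e.1 then (if e.2 ⟨t, hh⟩ = tildeMap e0 t then p ∅ e else 0) else 0) := by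
        intro e
        by_cases hh : t ∈ e.1
        · simp only [hh, dite_true]; split
          · exact hp.1 _ _
          · exact le_refl 0
        · simp [hh]
      have h0 := Finset.single_le_sum (f := fun e : RepEvent G =>
          if hh : t ∈ e.1 then (if e.2 ⟨t, hh⟩ = tildeMap e0 t then p ∅ e else 0) else 0)
          (fun e _ => this e) (Finset.mem_univ e0)
      simpa [tildeMap, ht] using h0
    have h2 : 0 ≤ if tildeMap e0 t = t then 1 - dProb p (tildeMap e0 t) ∅ else 0 := by
      split
      · linarith [dProb_le_one hp (tildeMap e0 t) (∅ : PopState G)]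
      · exact le_refl 0
    unfold M; simp only [Matrix.of_apply]; linarith
  · have heq : tildeMap e0 t = t := by simp [tildeMap, ht]
    rw [heq]
    have h1 : p ∅ e0 ≤ 1 - dProb p t ∅ := by
      rw [dProb_eq, ← hp.2 ∅, ← Finset.sum_sub_distrib]
      have : ∀ e : RepEvent G, 0 ≤ p ∅ e - (if t ∈ e.1 then p ∅ e else 0) := by
        intro e; split
        · simp
        · simpa using hp.1 ∅ e
      have h0 := Finset.single_le_sum (f := fun e : RepEvent G =>
          p ∅ e - (if t ∈ e.1 then p ∅ e else 0)) (fun e _ => this e) (Finset.mem_univ e0)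
      simpa [ht] using h0
    have h2 := eMarg_nonneg hp t t (∅ : PopState G)
    have h3 : M p t t = eMarg p t t ∅ + (1 - dProb p t ∅) := by simp [M]
    rw [h3]; linarith

lemma harmonic_le [Nonempty G] (hp : IsRule p) {m : ℕ} (ev : Fin m → RepEvent G)
    (hpos : ∀ k, ∀ x : PopState G, 0 < p x (ev k)) {g : G}
    (hfold : ∀ h : G, (List.ofFn fun k => tildeMap (ev k)).foldr (· ∘ ·) id h = g)
    (w : G → ℝ) (hw : ∀ t, w t = ∑ s, M p s t * w s) : ∀ t, w t ≤ w g := by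
  obtain ⟨t0, -, ht0⟩ := Finset.exists_max_image Finset.univ w Finset.univ_nonempty
  have ht0' : ∀ s, w s ≤ w t0 := fun s => ht0 s (Finset.mem_univ s)
  suffices hg : w g = w t0 by intro t; rw [hg]; exact ht0' t
  -- propagation of the maximum
  have prop : ∀ t, w t = w t0 → ∀ s, 0 < M p s t → w s = w t0 := by
    intro t ht s hs
    by_contra hne
    have hlt : w s < w t0 := lt_of_le_of_ne (ht0' s) hne
    have : ∑ s', M p s' t * w s' < ∑ s', M p s' t * w t0 := by
      refine Finset.sum_lt_sum (fun i _ => ?_) ⟨s, Finset.mem_univ s, ?_⟩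
      · exact mul_le_mul_of_nonneg_left (ht0' i) (M_nonneg hp i t)
      · exact mul_lt_mul_of_pos_left hlt hs
    rw [← Finset.sum_mul, col_sum hp, one_mul, ← hw t, ht] at this
    exact lt_irrefl _ this
  -- chain along lists of maps with positive steps
  have chain : ∀ l : List (G → G), (∀ f ∈ l, ∀ t : G, 0 < M p (f t) t) →
      ∀ t, w t = w t0 → w (l.foldr (· ∘ ·) id t) = w t0 := by
    intro l
    induction l with
    | nil => intro _ t ht; simpa using ht
    | cons f l ih =>
      intro hl t ht
      simp only [List.foldr_cons, Function.comp_apply]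
      exact prop _ (ih (fun f' hf' => hl f' (List.mem_cons_of_mem f hf')) t ht) _
        (hl f List.mem_cons_self _)
  have hmem : ∀ f ∈ (List.ofFn fun k => tildeMap (ev k)), ∀ t : G, 0 < M p (f t) t := by
    intro f hf t
    obtain ⟨k, rfl⟩ := List.mem_ofFn.1 hf
    exact step_pos hp (ev k) (hpos k ∅) t
  have := chain _ hmem t0 rfl
  rwa [hfold t0] at this

lemma harmonic_const [Nonempty G] (hp : IsRule p) (hfix : FixationAxiom p)
    (w : G → ℝ) (hw : ∀ t, w t = ∑ s, M p s t * w s) : ∃ c : ℝ, ∀ t, w t = c := by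
  obtain ⟨g, m, -, ev, hpos, -, hfold⟩ := hfix
  refine ⟨w g, fun t => le_antisymm (harmonic_le hp ev hpos hfold w hw t) ?_⟩
  have hw' : ∀ t, (-w) t = ∑ s, M p s t * (-w) s := by
    intro t
    simp only [Pi.neg_apply, mul_neg, Finset.sum_neg_distrib, neg_inj]
    exact hw t
  have := harmonic_le hp ev hpos hfold (-w) hw' t
  simpa using this

lemma ker_transpose [Nonempty G] (hp : IsRule p) (hfix : FixationAxiom p) :
    LinearMap.ker (Matrix.mulVecLin ((M p - 1)ᵀ)) =
      Submodule.span ℝ {(fun _ => (1 : ℝ) : G → ℝ)} := by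
  have hmem : ∀ w : G → ℝ, w ∈ LinearMap.ker (Matrix.mulVecLin ((M p - 1)ᵀ)) ↔
      ∀ t, w t = ∑ s, M p s t * w s := by
    intro w
    rw [LinearMap.mem_ker, Matrix.mulVecLin_apply, Matrix.transpose_sub, Matrix.transpose_one,
      Matrix.sub_mulVec, Matrix.one_mulVec, sub_eq_zero]
    constructor
    · intro h t
      have := congrFun h t
      simpa [Matrix.mulVec, dotProduct, Matrix.transpose_apply] using this.symm
    · intro h
      funext t
      simpa [Matrix.mulVec, dotProduct, Matrix.transpose_apply] using (h t).symm
  apply le_antisymm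
  · intro w hw
    obtain ⟨c, hc⟩ := harmonic_const hp hfix w ((hmem w).1 hw)
    rw [Submodule.mem_span_singleton]
    exact ⟨c, by funext t; simp [hc t]⟩
  · rw [Submodule.span_singleton_le_iff_mem]
    rw [hmem]
    intro t
    simp [← Finset.sum_mul, col_sum hp]

lemma finrank_ker_eq_one [Nonempty G] (hp : IsRule p) (hfix : FixationAxiom p) :
    finrank ℝ (LinearMap.ker (Matrix.mulVecLin (M p - 1))) = 1 := by
  have h1 := LinearMap.finrank_range_add_finrank_ker (Matrix.mulVecLin (M p - 1))
  have h2 := LinearMap.finrank_range_add_finrank_ker (Matrix.mulVecLin ((M p - 1)ᵀ))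
  have hr : finrank ℝ (LinearMap.range (Matrix.mulVecLin ((M p - 1)ᵀ))) =
      finrank ℝ (LinearMap.range (Matrix.mulVecLin (M p - 1))) :=
    Matrix.rank_transpose (M p - 1)
  have hk : finrank ℝ (LinearMap.ker (Matrix.mulVecLin ((M p - 1)ᵀ))) = 1 := by
    rw [ker_transpose hp hfix]
    exact finrank_span_singleton (by
      intro h
      have := congrFun h (Classical.arbitrary G)
      simpa using this)
  rw [Module.finrank_pi] at h1 h2
  omega


lemma mulVec_M (v : G → ℝ) (g : G) :
    (M p).mulVec v g = (∑ h, eMarg p g h ∅ * v h) + (1 - dProb p g ∅) * v g := by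
  show ∑ h, M p g h * v h = _
  have h1 : ∀ h, M p g h * v h =
      eMarg p g h ∅ * v h + (if g = h then (1 - dProb p g ∅) * v h else 0) := by
    intro h
    simp only [M, Matrix.of_apply, add_mul, ite_mul, zero_mul]
  rw [Finset.sum_congr rfl fun h _ => h1 h, Finset.sum_add_distrib,
    Finset.sum_ite_eq Finset.univ g (fun h => (1 - dProb p g ∅) * v h)]
  simp

lemma pos_part_ker (hp : IsRule p) (u : G → ℝ) (hu : (M p).mulVec u = u) :
    (M p).mulVec (fun g => max (u g) 0) = fun g => max (u g) 0 := by
  set u' : G → ℝ := fun g => max (u g) 0 with hu'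
  have hle : ∀ g, u' g ≤ (M p).mulVec u' g := by
    intro g
    have h1 : (M p).mulVec u g ≤ (M p).mulVec u' g :=
      Finset.sum_le_sum fun h _ =>
        mul_le_mul_of_nonneg_left (le_max_left _ _) (M_nonneg hp g h)
    have h2 : (0 : ℝ) ≤ (M p).mulVec u' g :=
      Finset.sum_nonneg fun h _ => mul_nonneg (M_nonneg hp g h) (le_max_right _ _)
    have h3 : u g ≤ (M p).mulVec u' g := by rw [← congrFun hu g]; exact h1
    exact max_le h3 h2
  have hsum : ∑ g, (M p).mulVec u' g = ∑ g, u' g := by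
    show ∑ g, ∑ h, M p g h * u' h = _
    rw [Finset.sum_comm]
    refine Finset.sum_congr rfl fun h _ => ?_
    rw [← Finset.sum_mul, col_sum hp, one_mul]
  have hz : ∀ g ∈ Finset.univ, (M p).mulVec u' g - u' g = 0 := by
    rw [← Finset.sum_eq_zero_iff_of_nonneg (fun g _ => by linarith [hle g])]
    rw [Finset.sum_sub_distrib, hsum, sub_self]
  funext g
  have := hz g (Finset.mem_univ g)
  linarith

end Statement6Aux


/-- Proposition 1 of Allen & McAvoy: for a replacement rule
satisfying the Fixation Axiom and Assumption 1, the reproductive-value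
equations `d°_g v_g = Σ_h e°_{gh} v_h` (for all `g ∈ G`) together with
`Σ_g v_g = n` have a unique solution, and that solution is nonnegative. -/
theorem statement6
    {G : Type} [Fintype G] [DecidableEq G] [Nonempty G]
    (p : PopState G → RepEvent G → ℝ) (hrule : IsRule p) (hfix : FixationAxiom p)
    (hcons : ConsistentMono p) :
    ∃ v : G → ℝ, (IsRepVal p v ∧ ∀ g, 0 ≤ v g) ∧
      ∀ w : G → ℝ, IsRepVal p w → w = v := by
  classical
  set n : ℝ := (Fintype.card G : ℝ) with hn
  have hmv : ∀ v : G → ℝ, ((Statement6Aux.M p).mulVec v = v) ↔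
      ∀ g, dProb p g ∅ * v g = ∑ h, eMarg p g h ∅ * v h := by
    intro v
    constructor
    · intro h g
      have := congrFun h g
      rw [Statement6Aux.mulVec_M] at this
      nlinarith [this]
    · intro h
      funext g
      rw [Statement6Aux.mulVec_M]
      nlinarith [h g]
  have hmemker : ∀ u : G → ℝ,
      u ∈ LinearMap.ker ((Statement6Aux.M p - 1).mulVecLin) ↔
        (Statement6Aux.M p).mulVec u = u := by
    intro u
    rw [LinearMap.mem_ker, Matrix.mulVecLin_apply, Matrix.sub_mulVec, Matrix.one_mulVec,
      sub_eq_zero]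
  have hKer : Module.finrank ℝ (LinearMap.ker ((Statement6Aux.M p - 1).mulVecLin)) = 1 :=
    Statement6Aux.finrank_ker_eq_one hrule hfix
  obtain ⟨v0s, hv0ne, hv0span⟩ := finrank_eq_one_iff'.1 hKer
  set v0 : G → ℝ := (v0s : G → ℝ) with hv0
  have hv0ker : (Statement6Aux.M p).mulVec v0 = v0 := (hmemker v0).1 v0s.2
  have hv0ne' : v0 ≠ 0 := fun h => hv0ne (Subtype.ext h)
  have hspan : ∀ u : G → ℝ, (Statement6Aux.M p).mulVec u = u → ∃ c : ℝ, c • v0 = u := by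
    intro u hu
    obtain ⟨c, hc⟩ := hv0span ⟨u, (hmemker u).2 hu⟩
    exact ⟨c, by simpa using congrArg Subtype.val hc⟩
  -- sign splitting
  have hP := Statement6Aux.pos_part_ker hrule v0 hv0ker
  have hNker : (Statement6Aux.M p).mulVec (-v0) = -v0 := by
    rw [Matrix.mulVec_neg, hv0ker]
  have hN := Statement6Aux.pos_part_ker hrule (-v0) hNker
  obtain ⟨aa, ha⟩ := hspan _ hP
  obtain ⟨bb, hb⟩ := hspan _ hN
  obtain ⟨g0, hg0⟩ := Function.ne_iff.1 hv0ne'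
  have hg0' : v0 g0 ≠ 0 := by simpa using hg0
  have hag : ∀ g, aa * v0 g = max (v0 g) 0 := fun g => congrFun ha g
  have hbg : ∀ g, bb * v0 g = max (-v0 g) 0 := by
    intro g
    have := congrFun hb g
    simpa using this
  have hab1 : aa - bb = 1 := by
    have h1 : aa * v0 g0 - bb * v0 g0 = v0 g0 := by
      rw [hag g0, hbg g0]
      rcases le_total (v0 g0) 0 with h | h
      · rw [max_eq_right h, max_eq_left (by linarith)]; ring
      · rw [max_eq_left h, max_eq_right (by linarith)]; ring
    have : (aa - bb - 1) * v0 g0 = 0 := by ring_nf; nlinarith [h1]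
    rcases mul_eq_zero.1 this with h | h
    · linarith
    · exact absurd h hg0'
  have hab0 : aa * bb = 0 := by
    have h1 : (aa * v0 g0) * (bb * v0 g0) = 0 := by
      rw [hag g0, hbg g0]
      rcases le_total (v0 g0) 0 with h | h
      · rw [max_eq_right h]; ring
      · rw [max_eq_right (by linarith : -v0 g0 ≤ 0)]; ring
    have h2 : aa * bb * (v0 g0 * v0 g0) = 0 := by nlinarith [h1]
    rcases mul_eq_zero.1 h2 with h | h
    · exact h
    · exact absurd (by rcases mul_eq_zero.1 h with h' | h' <;> exact h') hg0'
  obtain ⟨v1, hv1ker, hv1nn, hv1ne, hv1span⟩ :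
      ∃ v1 : G → ℝ, (Statement6Aux.M p).mulVec v1 = v1 ∧ (∀ g, 0 ≤ v1 g) ∧ v1 ≠ 0 ∧
        ∀ u : G → ℝ, (Statement6Aux.M p).mulVec u = u → ∃ c : ℝ, c • v1 = u := by
    rcases mul_eq_zero.1 hab0 with h0 | h0
    · -- aa = 0, bb = -1, -v0 ≥ 0
      have hbb : bb = -1 := by linarith
      refine ⟨-v0, hNker, ?_, neg_ne_zero.2 hv0ne', ?_⟩
      · intro g
        have := hbg g
        rw [hbb] at this
        have h2 : -v0 g = max (-v0 g) 0 := by linarith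
        show (0:ℝ) ≤ -v0 g
        rw [h2]
        exact le_max_right _ _
      · intro u hu
        obtain ⟨c, hc⟩ := hspan u hu
        exact ⟨-c, by rw [neg_smul_neg]; exact hc⟩
    · -- bb = 0, aa = 1, v0 ≥ 0
      have haa : aa = 1 := by linarith
      refine ⟨v0, hv0ker, ?_, hv0ne', hspan⟩
      intro g
      have := hag g
      rw [haa, one_mul] at this
      rw [this]
      exact le_max_right _ _
  have hs : 0 < ∑ g, v1 g := by
    obtain ⟨g1, hg1⟩ := Function.ne_iff.1 hv1ne
    refine Finset.sum_pos' (fun g _ => hv1nn g) ⟨g1, Finset.mem_univ g1, ?_⟩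
    exact lt_of_le_of_ne (hv1nn g1) (Ne.symm (by simpa using hg1))
  set s : ℝ := ∑ g, v1 g with hsdef
  have hsne : s ≠ 0 := ne_of_gt hs
  refine ⟨(n / s) • v1, ⟨⟨?_, ?_⟩, ?_⟩, ?_⟩
  · -- the RV equations
    refine (hmv _).1 ?_
    rw [Matrix.mulVec_smul, hv1ker]
  · -- the sum is n
    show ∑ g, (n / s) * v1 g = n
    rw [← Finset.mul_sum, ← hsdef, div_mul_cancel₀ _ hsne]
  · -- nonnegativity
    intro g
    have hn0 : (0 : ℝ) ≤ n := by positivity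
    exact mul_nonneg (div_nonneg hn0 (le_of_lt hs)) (hv1nn g)
  · -- uniqueness
    intro w hw
    have hwk : (Statement6Aux.M p).mulVec w = w := (hmv w).2 hw.1
    obtain ⟨c, hc⟩ := hv1span w hwk
    have hsum : c * s = n := by
      rw [hsdef, Finset.mul_sum, hn]
      rw [← hw.2]
      exact Finset.sum_congr rfl fun g _ => by rw [← congrFun hc g]; rfl
    have hcval : c = n / s := by field_simp at hsum ⊢; linarith
    rw [← hc, hcval]
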